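/- Let G act strongly transitively on a thick spherical building Δ, let Σ be an apartment, c ∈ Σ a chamber, c̄ the chamber of Σ opposite c, and b ∈ B (the stabilizer of c). Fix a minimal gallery c = c₀, c₁, …, c_m = c̄ in Σ. If i is the largest index with b(c_i) ∈ Σ and i < m, then there exists an element k ∈ B fixing both panels of the pair of opposite panels of Σ determined by c_i ∩ c_{i+1}, such that k(c_{i+1}) = b(c_{i+1}) and k(c_j) = c_j for all j ≤ i. -/

import Mathlib

/-- A building in the `W`-metric (chamber system) sense: a type `C` of chambers with a
Weyl-distance function `δ : C → C → W` satisfying the standard axioms. -/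
structure IsWBuilding {I W : Type*} [Group W] {M : CoxeterMatrix I}
    (cs : CoxeterSystem M W) {C : Type*} (δ : C → C → W) : Prop where
  eq_one_iff : ∀ c d : C, δ c d = 1 ↔ c = d
  symm : ∀ c d : C, δ d c = (δ c d)⁻¹
  step : ∀ c d e : C, ∀ i : I, δ d e = cs.simple i →
    δ c e = δ c d * cs.simple i ∨ δ c e = δ c d
  step_len : ∀ c d e : C, ∀ i : I, δ d e = cs.simple i →
    cs.length (δ c d * cs.simple i) = cs.length (δ c d) + 1 →
    δ c e = δ c d * cs.simple i
  exists_step : ∀ c d : C, ∀ i : I, ∃ e : C, δ d e = cs.simple i ∧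
    δ c e = δ c d * cs.simple i

/-- An apartment: the image of a `δ`-isometric copy of the Coxeter group `W`. -/
def IsApartmentOf {I W : Type*} [Group W] {M : CoxeterMatrix I}
    (cs : CoxeterSystem M W) {C : Type*} (δ : C → C → W) (A : Set C) : Prop :=
  ∃ f : W → C, Function.Injective f ∧ Set.range f = A ∧
    ∀ u v : W, δ (f u) (f v) = u⁻¹ * v

/-- Thickness: every panel contains at least three chambers. -/
def IsThick {I W : Type*} [Group W] {M : CoxeterMatrix I}
    (cs : CoxeterSystem M W) {C : Type*} (δ : C → C → W) : Prop :=
  ∀ c : C, ∀ i : I, ∃ d e : C, δ c d = cs.simple i ∧ δ c e = cs.simple i ∧ d ≠ e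

/-- The panel of a chamber `c` in the direction of the generator `i`. -/
def panelOf {I W : Type*} [Group W] {M : CoxeterMatrix I}
    (cs : CoxeterSystem M W) {C : Type*} (δ : C → C → W) (c : C) (i : I) : Set C :=
  {d | δ c d = 1 ∨ δ c d = cs.simple i}

/-- `P` is a panel of the building. -/
def IsPanel {I W : Type*} [Group W] {M : CoxeterMatrix I}
    (cs : CoxeterSystem M W) {C : Type*} (δ : C → C → W) (P : Set C) : Prop :=
  ∃ c i, P = panelOf cs δ c i

/-- A pair of opposite panels of the apartment `A` (with respect to the longest
element `w₀`): both panels meet `A` and they contain opposite chambers of `A`. -/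
def OppPanelsIn {I W : Type*} [Group W] {M : CoxeterMatrix I}
    (cs : CoxeterSystem M W) {C : Type*} (δ : C → C → W) (w₀ : W)
    (A P Q : Set C) : Prop :=
  IsPanel cs δ P ∧ IsPanel cs δ Q ∧
    ∃ c ∈ P ∩ A, ∃ d ∈ Q ∩ A, δ c d = w₀

/-- A `G`-action by (type-preserving) automorphisms of the building. -/
def IsIsometricAction {I W : Type*} [Group W] {M : CoxeterMatrix I}
    (cs : CoxeterSystem M W) {C : Type*} (δ : C → C → W)
    (G : Type*) [Group G] [MulAction G C] : Prop :=
  ∀ g : G, ∀ c d : C, δ (g • c) (g • d) = δ c d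

/-- Strong transitivity: `G` is transitive on pairs (apartment, chamber in it). -/
def IsStronglyTransitive {I W : Type*} [Group W] {M : CoxeterMatrix I}
    (cs : CoxeterSystem M W) {C : Type*} (δ : C → C → W)
    (G : Type*) [Group G] [MulAction G C] : Prop :=
  ∀ A A' : Set C, IsApartmentOf cs δ A → IsApartmentOf cs δ A' →
    ∀ c ∈ A, ∀ c' ∈ A', ∃ g : G, (fun x => g • x) '' A = A' ∧ g • c = c'


namespace StrongExchangeAux

open List

variable {I W : Type*} [Group W] {M : CoxeterMatrix I} (cs : CoxeterSystem M W)

local prefix:100 "σ" => cs.simple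
local prefix:100 "π" => cs.wordProd
local prefix:100 "ℓ" => cs.length
local prefix:100 "ris" => cs.rightInvSeq
local prefix:100 "lis" => cs.leftInvSeq

theorem ris_cons (i : I) (ω : List I) :
    ris (i :: ω) = ((π ω)⁻¹ * σ i * π ω) :: ris ω := rfl

theorem ris_append (ω τ : List I) :
    ris (ω ++ τ) = (ris ω).map (fun u => (π τ)⁻¹ * u * π τ) ++ ris τ := by
  induction ω with
  | nil => simp
  | cons i ω ih =>
    rw [cons_append, ris_cons, ris_cons, ih, cs.wordProd_append]
    simp only [map_cons, cons_append, mul_inv_rev]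
    congr 1
    group

theorem lis_eq_map (ω : List I) :
    lis ω = (ris ω).map (fun u => (π ω) * u * (π ω)⁻¹) := by
  induction ω with
  | nil => simp
  | cons i ω ih =>
    rw [CoxeterSystem.leftInvSeq, ris_cons, map_cons, ih, map_map]
    congr 1
    · rw [cs.wordProd_cons]
      simp only [mul_inv_rev, cs.inv_simple]
      group
      simp [cs.simple_sq]
    · apply List.map_congr_left
      intro u _
      simp only [Function.comp_apply, MulAut.conj_apply, cs.wordProd_cons, mul_inv_rev,
        cs.inv_simple]
      group

variable [DecidableEq W]

theorem count_map_conj (a x : W) (l : List W) :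
    count x (l.map fun u => a * u * a⁻¹) = count (a⁻¹ * x * a) l := by
  have hinj : Function.Injective (fun u => a * u * a⁻¹) := by
    intro u v huv
    simpa using mul_left_cancel (mul_right_cancel huv)
  have h := count_map_of_injective l (fun u => a * u * a⁻¹) hinj (a⁻¹ * x * a)
  simpa [show a * (a⁻¹ * x * a) * a⁻¹ = x by group] using h

/-- The palindrome word for a reflection has odd count of the reflection in its
right inversion sequence. -/
theorem count_ris_palindrome (v : W) (ρ : List I) (hρ : π ρ = v) (i : I) :
    count (v * σ i * v⁻¹) (ris (ρ ++ i :: ρ.reverse)) =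
      2 * count (σ i) (ris ρ) + 1 := by
  set t := v * σ i * v⁻¹ with ht
  rw [ris_append, count_append, ris_cons, count_cons]
  have hπrev : π ρ.reverse = v⁻¹ := by rw [cs.wordProd_reverse, hρ]
  have hhead : (π ρ.reverse)⁻¹ * σ i * π ρ.reverse = t := by
    rw [hπrev, ht, inv_inv]
  have hπτ : π (i :: ρ.reverse) = σ i * v⁻¹ := by rw [cs.wordProd_cons, hπrev]
  have h1 : count t ((ris ρ).map fun u => (π (i :: ρ.reverse))⁻¹ * u * π (i :: ρ.reverse))
      = count (σ i) (ris ρ) := by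
    have : (fun u => (π (i :: ρ.reverse))⁻¹ * u * π (i :: ρ.reverse))
        = fun u => (σ i * v⁻¹)⁻¹ * u * ((σ i * v⁻¹)⁻¹)⁻¹ := by
      funext u; rw [hπτ]; group
    rw [this, count_map_conj]
    congr 1
    rw [ht]
    simp only [mul_inv_rev, inv_inv, cs.inv_simple]
    group
    simp [cs.simple_sq, ← sq]
  have h2 : count t (ris ρ.reverse) = count (σ i) (ris ρ) := by
    rw [cs.rightInvSeq_reverse, count_reverse, lis_eq_map, hρ, count_map_conj]
    congr 1
    rw [ht]; group
  rw [h1, hhead, h2]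
  simp
  ring



/-! ### Alternating words -/

theorem alternatingWord_two_add (i j : I) (m : ℕ) :
    CoxeterSystem.alternatingWord i j (m + 2) = CoxeterSystem.alternatingWord i j m ++ [i, j] := by
  rw [CoxeterSystem.alternatingWord_succ, CoxeterSystem.alternatingWord_succ]
  simp [concat_eq_append, append_assoc]

theorem prod_map_alternatingWord {G : Type*} [Monoid G] (g : I → G) (i j : I) (m : ℕ) :
    ((CoxeterSystem.alternatingWord i j (2 * m)).map g).prod = (g i * g j) ^ m := by
  induction m with
  | zero => simp [CoxeterSystem.alternatingWord]
  | succ m ih =>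
    have h : 2 * (m + 1) = 2 * m + 2 := by ring
    rw [h, alternatingWord_two_add, map_append, prod_append, ih]
    simp [pow_succ, mul_assoc]

theorem alternatingWord_add (i j : I) (m : ℕ) :
    ∀ k, CoxeterSystem.alternatingWord i j (m + k) =
      CoxeterSystem.alternatingWord (if Even k then i else j) (if Even k then j else i) m
        ++ CoxeterSystem.alternatingWord i j k := by
  intro k
  induction k generalizing i j with
  | zero => simp [CoxeterSystem.alternatingWord]
  | succ k ih =>
    have h : m + (k + 1) = (m + k) + 1 := rfl
    rw [h, CoxeterSystem.alternatingWord_succ i j (m + k), ih j i,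
      concat_eq_append, append_assoc, ← concat_eq_append,
      ← CoxeterSystem.alternatingWord_succ i j k]
    by_cases h : Even k <;> simp [h, Nat.even_add_one]

theorem drop_alternatingWord (i j : I) (p n : ℕ) (h : p ≤ n) :
    (CoxeterSystem.alternatingWord i j n).drop p = CoxeterSystem.alternatingWord i j (n - p) := by
  have key := alternatingWord_add i j p (n - p)
  rw [show p + (n - p) = n by omega] at key
  rw [key, drop_left' (CoxeterSystem.length_alternatingWord _ _ p)]

theorem reverse_alternatingWord (i j : I) (m : ℕ) :
    (CoxeterSystem.alternatingWord i j m).reverse =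
      CoxeterSystem.alternatingWord (if Even m then j else i) (if Even m then i else j) m := by
  induction m generalizing i j with
  | zero => simp [CoxeterSystem.alternatingWord]
  | succ m ih =>
    rw [CoxeterSystem.alternatingWord_succ, concat_eq_append, reverse_append, ih j i]
    by_cases h : Even m <;>
      simp [h, Nat.even_add_one, CoxeterSystem.alternatingWord_succ']

theorem prod_alt_comm (i j : I) (m : ℕ) (hij : (σ i * σ j) ^ m = 1) :
    π (CoxeterSystem.alternatingWord i j m) = π (CoxeterSystem.alternatingWord j i m) := by
  have hji : (σ j * σ i) ^ m = 1 := by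
    have : σ j * σ i = (σ i * σ j)⁻¹ := by
      rw [mul_inv_rev, cs.inv_simple, cs.inv_simple]
    rw [this, inv_pow, hij, inv_one]
  have key : (π (CoxeterSystem.alternatingWord i j m))⁻¹
      * π (CoxeterSystem.alternatingWord j i m) = 1 := by
    rw [← cs.wordProd_reverse, ← cs.wordProd_append, reverse_alternatingWord,
      ← alternatingWord_add j i m m]
    have h2 : π (CoxeterSystem.alternatingWord j i (2 * m)) = (σ j * σ i) ^ m := by
      rw [CoxeterSystem.wordProd]
      exact prod_map_alternatingWord cs.simple j i m
    rw [show m + m = 2 * m by ring, h2, hji]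
  have := mul_eq_one_iff_inv_eq.mp key
  rw [inv_inv] at this
  exact this

theorem period_alt (i j : I) (m : ℕ) (hij : (σ i * σ j) ^ m = 1) (K : ℕ) :
    (π (CoxeterSystem.alternatingWord i j (K + m)))⁻¹
        * π (CoxeterSystem.alternatingWord i j (K + m + 1))
      = (π (CoxeterSystem.alternatingWord i j K))⁻¹
        * π (CoxeterSystem.alternatingWord i j (K + 1)) := by
  have hji : (σ j * σ i) ^ m = 1 := by
    have : σ j * σ i = (σ i * σ j)⁻¹ := by
      rw [mul_inv_rev, cs.inv_simple, cs.inv_simple]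
    rw [this, inv_pow, hij, inv_one]
  rw [show K + m = m + K by ring, show m + K + 1 = m + (K + 1) by ring,
    alternatingWord_add i j m K, alternatingWord_add i j m (K + 1),
    cs.wordProd_append, cs.wordProd_append]
  by_cases h : Even K
  · rw [show (if Even (K+1) then i else j) = j by simp [Nat.even_add_one, h],
      show (if Even (K+1) then j else i) = i by simp [Nat.even_add_one, h],
      show (if Even K then i else j) = i by simp [h],
      show (if Even K then j else i) = j by simp [h]]
    rw [prod_alt_comm cs i j m hij]
    rw [mul_inv_rev]
    group
  · rw [show (if Even (K+1) then i else j) = i by simp [Nat.even_add_one, h],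
      show (if Even (K+1) then j else i) = j by simp [Nat.even_add_one, h],
      show (if Even K then i else j) = j by simp [h],
      show (if Even K then j else i) = i by simp [h]]
    rw [prod_alt_comm cs j i m hji]
    rw [mul_inv_rev]
    group

theorem getD_ris_alternatingWord (i j : I) (n r : ℕ) (h : r < n) :
    (ris (CoxeterSystem.alternatingWord i j n)).getD r 1
      = (π (CoxeterSystem.alternatingWord i j (n - r - 1)))⁻¹
        * π (CoxeterSystem.alternatingWord i j (n - r)) := by
  rw [cs.getD_rightInvSeq, drop_alternatingWord i j (r + 1) n (by omega)]
  have hd : (CoxeterSystem.alternatingWord i j n).drop r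
      = CoxeterSystem.alternatingWord i j (n - r) := drop_alternatingWord i j r n (by omega)
  have hsucc : CoxeterSystem.alternatingWord i j (n - r)
      = (if Even (n - r - 1) then j else i) :: CoxeterSystem.alternatingWord i j (n - r - 1) := by
    rw [show n - r = (n - r - 1) + 1 by omega, CoxeterSystem.alternatingWord_succ']
    simp
  have hget : (CoxeterSystem.alternatingWord i j n)[r]?
      = some (if Even (n - r - 1) then j else i) := by
    have h0 := List.getElem?_drop (xs := CoxeterSystem.alternatingWord i j n) (i := r) (j := 0)
    rw [hd, hsucc] at h0
    simp only [List.getElem?_cons_zero, Nat.add_zero] at h0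
    rw [← h0]
  rw [hget]
  simp only [Option.map_some, Option.getD_some]
  rw [show n - (r + 1) = n - r - 1 by omega, hsucc, cs.wordProd_cons, mul_assoc]

theorem ris_alternatingWord_eq (i j : I) (n : ℕ) :
    ris (CoxeterSystem.alternatingWord i j n) = (range n).map
      (fun r => (π (CoxeterSystem.alternatingWord i j (n - r - 1)))⁻¹
        * π (CoxeterSystem.alternatingWord i j (n - r))) := by
  apply List.ext_getElem
  · simp
  · intro r h1 h2
    rw [← List.getD_eq_getElem _ 1 h1]
    rw [cs.length_rightInvSeq, CoxeterSystem.length_alternatingWord] at h1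
    rw [getD_ris_alternatingWord cs i j n r h1]
    rw [List.getElem_map, List.getElem_range]

theorem even_count_ris_alternatingWord (i j : I) (m : ℕ) (hij : (σ i * σ j) ^ m = 1) (x : W) :
    Even (count x (ris (CoxeterSystem.alternatingWord i j (2 * m)))) := by
  rw [ris_alternatingWord_eq]
  have h2m : 2 * m = m + m := two_mul m
  rw [h2m, List.range_add, map_append, map_map]
  have heq : ∀ (L L' : List W), L = L' → Even (count x (L ++ L')) := by
    rintro L _ rfl
    rw [count_append]
    exact ⟨count x L, rfl⟩
  apply heq
  apply List.map_congr_left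
  intro r hr
  rw [mem_range] at hr
  simp only [Function.comp_apply]
  have e1 : m + m - r - 1 = (m - r - 1) + m := by omega
  have e2 : m + m - r = (m - r - 1) + m + 1 := by omega
  have e3 : m + m - (m + r) - 1 = m - r - 1 := by omega
  have e4 : m + m - (m + r) = (m - r - 1) + 1 := by omega
  rw [e1, e2, e3, e4, period_alt cs i j m hij (m - r - 1)]

/-! ### The parity cocycle -/

def sigmaPerm (i : I) : Equiv.Perm (W × ZMod 2) :=
  Function.Involutive.toPerm
    (fun p => (σ i * p.1 * σ i, if p.1 = σ i then p.2 + 1 else p.2))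
    (by
      have hcomp : ∀ u : W, σ i * (σ i * u * σ i) * σ i = u := by
        intro u
        have h1 : σ i * (σ i * u * σ i) * σ i = σ i * σ i * u * (σ i * σ i) := by group
        rw [h1, cs.simple_mul_simple_self, one_mul, mul_one]
      have hcond : ∀ u : W, (σ i * u * σ i = σ i) ↔ u = σ i := by
        intro u
        constructor
        · intro h
          have h2 := hcomp u
          rw [h] at h2
          rw [← h2, cs.simple_mul_simple_self, one_mul]
        · rintro rfl
          rw [cs.simple_mul_simple_self, one_mul]
      rintro ⟨t, e⟩
      simp only
      by_cases h : t = σ i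
      · rw [if_pos h, if_pos ((hcond t).mpr h), hcomp]
        rw [Prod.mk.injEq]
        refine ⟨rfl, ?_⟩
        rw [add_assoc, show (1 + 1 : ZMod 2) = 0 by decide, add_zero]
      · rw [if_neg h, if_neg (fun hc => h ((hcond t).mp hc)), hcomp])

theorem sigmaPerm_apply (i : I) (t : W) (e : ZMod 2) :
    sigmaPerm cs i (t, e) = (σ i * t * σ i, if t = σ i then e + 1 else e) := rfl

theorem prod_sigmaPerm_apply (ω : List I) (t : W) (e : ZMod 2) :
    ((ω.map (sigmaPerm cs)).prod) (t, e)
      = (π ω * t * (π ω)⁻¹, e + (count t (ris ω) : ZMod 2)) := by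
  induction ω with
  | nil => simp
  | cons i ω ih =>
    rw [map_cons, prod_cons, Equiv.Perm.mul_apply, ih, sigmaPerm_apply]
    rw [ris_cons, count_cons]
    have hcond : (π ω * t * (π ω)⁻¹ = σ i) ↔ (t = (π ω)⁻¹ * σ i * π ω) := by
      constructor
      · intro h
        rw [← h]; group
      · intro h
        rw [h]; group
    rw [Prod.mk.injEq]
    constructor
    · rw [cs.wordProd_cons, mul_inv_rev, cs.inv_simple]
      group
    · by_cases h : t = (π ω)⁻¹ * σ i * π ω
      · rw [if_pos (hcond.mpr h), if_pos (by simp [h])]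
        push_cast
        ring
      · rw [if_neg (fun hc => h (hcond.mp hc)), if_neg (by simp; exact fun hc => h hc.symm)]
        push_cast
        ring

theorem sigmaPerm_liftable : M.IsLiftable (sigmaPerm cs) := by
  intro i j
  have hpow : (sigmaPerm cs i * sigmaPerm cs j) ^ M i j
      = ((CoxeterSystem.alternatingWord i j (2 * M i j)).map (sigmaPerm cs)).prod :=
    (prod_map_alternatingWord (sigmaPerm cs) i j (M i j)).symm
  rw [hpow]
  apply Equiv.ext
  rintro ⟨t, e⟩
  rw [prod_sigmaPerm_apply]
  have hπ : π (CoxeterSystem.alternatingWord i j (2 * M i j)) = 1 := by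
    rw [CoxeterSystem.wordProd, prod_map_alternatingWord cs.simple i j (M i j),
      cs.simple_mul_simple_pow]
  have heven := even_count_ris_alternatingWord cs i j (M i j)
    (cs.simple_mul_simple_pow i j) t
  have hzero : ((count t (ris (CoxeterSystem.alternatingWord i j (2 * M i j))) : ℕ) : ZMod 2)
      = 0 := (ZMod.natCast_eq_zero_iff _ 2).mpr heven.two_dvd
  rw [hπ, hzero, add_zero, inv_one, mul_one, one_mul]
  rfl

theorem count_ris_parity {ω ω' : List I} (h : π ω = π ω') (t : W) :
    ((count t (ris ω) : ℕ) : ZMod 2) = ((count t (ris ω') : ℕ) : ZMod 2) := by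
  let θ := cs.lift ⟨sigmaPerm cs, sigmaPerm_liftable cs⟩
  have hθ : ∀ ζ : List I, θ (π ζ) = (ζ.map (sigmaPerm cs)).prod := by
    intro ζ
    rw [CoxeterSystem.wordProd, map_list_prod, map_map]
    congr 1
    apply List.map_congr_left
    intro a _
    simp only [Function.comp_apply]
    exact cs.lift_apply_simple (sigmaPerm_liftable cs) a
  have h1 := prod_sigmaPerm_apply cs ω t 0
  have h2 := prod_sigmaPerm_apply cs ω' t 0
  rw [← hθ ω] at h1
  rw [← hθ ω', ← h] at h2
  have h3 := h1.symm.trans h2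
  have h4 := congrArg Prod.snd h3
  simpa using h4

/-! ### Strong exchange (inversion membership) -/

theorem mem_ris_of_isRightInversion {w t : W} (ht : cs.IsReflection t)
    (hlt : ℓ (w * t) < ℓ w) {ω : List I} (hred : cs.IsReduced ω) (hπ : π ω = w) :
    t ∈ ris ω := by
  obtain ⟨v, i, htv⟩ := ht
  obtain ⟨ρ, hρ⟩ := cs.wordProd_surjective v
  obtain ⟨ω', hred', hπ'⟩ := cs.exists_reduced_word' (w * t)
  have htt : t * t = 1 := by
    rw [htv]
    have h1 : v * σ i * v⁻¹ * (v * σ i * v⁻¹) = v * (σ i * σ i) * v⁻¹ := by group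
    rw [h1, cs.simple_mul_simple_self, mul_one, mul_inv_cancel]
  set τ := ρ ++ i :: ρ.reverse with hτ
  have hπτ : π τ = t := by
    rw [hτ, cs.wordProd_append, cs.wordProd_cons, cs.wordProd_reverse, hρ, htv, mul_assoc]
  have hπeq : π ω = π (ω' ++ τ) := by
    rw [cs.wordProd_append, hπτ, ← hπ', hπ, mul_assoc, htt, mul_one]
  have hparity := count_ris_parity cs hπeq t
  rw [ris_append, count_append] at hparity
  have hmapcount : count t ((ris ω').map fun u => (π τ)⁻¹ * u * π τ)
      = count t (ris ω') := by
    have hfun : (fun u => (π τ)⁻¹ * u * π τ) = fun u => t⁻¹ * u * (t⁻¹)⁻¹ := by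
      funext u
      rw [hπτ, inv_inv]
    rw [hfun, count_map_conj]
    congr 1
    rw [inv_inv]
    rw [show t * t * t⁻¹ = t * (t * t⁻¹) by group, mul_inv_cancel, mul_one]
  have hzero : count t (ris ω') = 0 := by
    rw [List.count_eq_zero]
    intro hmem
    have hinv := (cs.isRightInversion_of_mem_rightInvSeq hred' hmem).2
    have h2 : π ω' * t = w := by rw [← hπ', mul_assoc, htt, mul_one]
    rw [h2, ← hπ'] at hinv
    omega
  have hodd := count_ris_palindrome cs v ρ hρ i
  rw [← htv] at hodd
  by_contra hnmem
  rw [List.count_eq_zero.mpr hnmem] at hparity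
  rw [hmapcount, hzero, hodd] at hparity
  push_cast at hparity
  rw [show ((2 : ZMod 2)) = 0 by decide] at hparity
  simp at hparity

/-! ### The longest element -/

theorem length_add_length_mul_longest (w₀ : W) (hw₀ : ∀ w, ℓ w ≤ ℓ w₀) (x : W) :
    ℓ x + ℓ (x * w₀) = ℓ w₀ := by
  generalize hn : ℓ x = n
  induction n using Nat.strong_induction_on generalizing x with
  | _ n ih =>
  rcases eq_or_ne x 1 with rfl | hx1
  · rw [← hn, cs.length_one, one_mul, zero_add]
  obtain ⟨i, hdesc⟩ := cs.exists_rightDescent_of_ne_one hx1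
  rw [CoxeterSystem.IsRightDescent] at hdesc
  set x' := x * σ i with hx'
  have hxx : x' * σ i = x := by
    rw [hx', cs.simple_mul_simple_cancel_right]
  have hlen' : ℓ x' + 1 = ℓ x := by
    rcases cs.length_mul_simple x i with hh | hh
    · rw [← hx'] at hh; omega
    · rw [← hx'] at hh; omega
  have hIH : ℓ x' + ℓ (x' * w₀) = ℓ w₀ := ih (ℓ x') (by omega) x' rfl
  set z := x' * w₀ with hz
  obtain ⟨ωz, hzred, hzπ⟩ := cs.exists_reduced_word' z
  obtain ⟨ρ, hρred, hρπ⟩ := cs.exists_reduced_word' x'⁻¹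
  have hπ₀ : π (ρ ++ ωz) = w₀ := by
    rw [cs.wordProd_append, ← hρπ, ← hzπ, hz]
    group
  have hred₀ : cs.IsReduced (ρ ++ ωz) := by
    rw [CoxeterSystem.IsReduced, hπ₀, length_append]
    have e1 : ρ.length = ℓ x' := by
      rw [CoxeterSystem.IsReduced] at hρred
      rw [← hρred, ← hρπ, cs.length_inv]
    have e2 : ωz.length = ℓ z := by
      rw [CoxeterSystem.IsReduced] at hzred
      rw [← hzred, ← hzπ]
    omega
  set t' := w₀⁻¹ * σ i * w₀ with ht'
  have ht'refl : cs.IsReflection t' := ⟨w₀⁻¹, i, by rw [ht', inv_inv]⟩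
  have hlt : ℓ (w₀ * t') < ℓ w₀ := by
    have h1 : w₀ * t' = σ i * w₀ := by rw [ht']; group
    rw [h1]
    exact lt_of_le_of_ne (hw₀ _) (cs.length_simple_mul_ne w₀ i)
  have hmem := mem_ris_of_isRightInversion cs ht'refl hlt hred₀ hπ₀
  rw [ris_append] at hmem
  rcases mem_append.mp hmem with hm | hm
  · obtain ⟨e, he, hfe⟩ := mem_map.mp hm
    have he' : e = x' * σ i * x'⁻¹ := by
      have h1 : e = π ωz * t' * (π ωz)⁻¹ := by
        rw [← hfe]; group
      rw [h1, ← hzπ, hz, ht']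
      group
    have hinv := (cs.isRightInversion_of_mem_rightInvSeq hρred he).2
    rw [← hρπ, he'] at hinv
    have h2 : x'⁻¹ * (x' * σ i * x'⁻¹) = σ i * x'⁻¹ := by group
    rw [h2] at hinv
    have h3 : ℓ (σ i * x'⁻¹) = ℓ x := by
      rw [← cs.length_inv, mul_inv_rev, inv_inv, cs.inv_simple, hxx]
    rw [h3, cs.length_inv] at hinv
    omega
  · have hinv := (cs.isRightInversion_of_mem_rightInvSeq hzred hm).2
    rw [← hzπ] at hinv
    have h1 : z * t' = x * w₀ := by
      rw [hz, ht', ← hxx]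
      group
    rw [h1] at hinv
    have htri : ℓ w₀ ≤ ℓ x + ℓ (x * w₀) := by
      have h2 := cs.length_mul_le x⁻¹ (x * w₀)
      rw [inv_mul_cancel_left, cs.length_inv] at h2
      exact h2
    omega

end StrongExchangeAux

namespace BuildingAux

open List

variable {I W : Type*} [Group W] {M : CoxeterMatrix I} (cs : CoxeterSystem M W)
  {Ch : Type*} {δ : Ch → Ch → W}

local prefix:100 "σ" => cs.simple
local prefix:100 "π" => cs.wordProd
local prefix:100 "ℓ" => cs.length

theorem delta_self (hbld : IsWBuilding cs δ) (c : Ch) : δ c c = 1 := (hbld.eq_one_iff c c).2 rfl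

theorem delta_symm_simple (hbld : IsWBuilding cs δ) {c d : Ch} (i : I) (h : δ c d = σ i) :
    δ d c = σ i := by
  rw [hbld.symm, h, cs.inv_simple]

theorem tri (hbld : IsWBuilding cs δ) {a b d : Ch} {i : I} {v : W} (hab : δ a b = σ i)
    (hbd : δ b d = v) (hv : ℓ (σ i * v) = ℓ v + 1) : δ a d = σ i * v := by
  have h1 : δ d b = v⁻¹ := by rw [hbld.symm, hbd]
  have h2 : δ b a = σ i := delta_symm_simple cs hbld i hab
  have hlen : ℓ (δ d b * σ i) = ℓ (δ d b) + 1 := by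
    rw [h1]
    have e1 : ℓ (v⁻¹ * σ i) = ℓ (σ i * v) := by
      rw [← cs.length_inv (v⁻¹ * σ i), mul_inv_rev, inv_inv, cs.inv_simple]
    rw [e1, cs.length_inv, hv]
  have h3 := hbld.step_len d b a i h2 hlen
  rw [h1] at h3
  have h4 : (δ a d)⁻¹ = v⁻¹ * σ i := by rw [← hbld.symm a d]; exact h3
  have h5 : δ a d = (v⁻¹ * σ i)⁻¹ := by rw [← h4, inv_inv]
  rw [h5, mul_inv_rev, inv_inv, cs.inv_simple]

theorem exists_between (hbld : IsWBuilding cs δ) :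
    ∀ (ω : List I), cs.IsReduced ω → ∀ (x y : Ch), δ x y = π ω → ∀ k, k ≤ ω.length →
      ∃ z, δ x z = π (ω.take k) ∧ δ z y = π (ω.drop k) := by
  intro ω
  induction ω with
  | nil =>
    intro _ x y hxy k _
    refine ⟨x, by simp [delta_self cs hbld], by simpa using hxy⟩
  | cons i ω ih =>
    intro hred x y hxy k hk
    rcases Nat.eq_zero_or_pos k with rfl | hkpos
    · exact ⟨x, by simp [delta_self cs hbld], by simpa using hxy⟩
    obtain ⟨k', rfl⟩ : ∃ k', k = k' + 1 := ⟨k - 1, by omega⟩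
    have hyx : δ y x = (π (i :: ω))⁻¹ := by rw [hbld.symm, hxy]
    obtain ⟨z₁, hz₁e, hz₁y⟩ := hbld.exists_step y x i
    have hz₁y' : δ z₁ y = π ω := by
      have h1 : δ y z₁ = (π ω)⁻¹ := by
        rw [hz₁y, hyx, cs.wordProd_cons, mul_inv_rev, cs.inv_simple,
          cs.simple_mul_simple_cancel_right]
      rw [hbld.symm y z₁, h1, inv_inv]
    have hredω : cs.IsReduced ω := by simpa using CoxeterSystem.IsReduced.drop hred 1
    obtain ⟨z, hz1, hz2⟩ := ih hredω z₁ y hz₁y' k' (by simpa using hk)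
    have hk' : k' ≤ ω.length := by simpa using hk
    refine ⟨z, ?_, ?_⟩
    · have hlen : ℓ (σ i * π (ω.take k')) = ℓ (π (ω.take k')) + 1 := by
        have e1 : ℓ (π (ω.take k')) = k' := by
          have := CoxeterSystem.IsReduced.take hredω k'
          rw [CoxeterSystem.IsReduced] at this
          rw [this, length_take]
          omega
        have e2 : ℓ (σ i * π (ω.take k')) = k' + 1 := by
          have h3 := CoxeterSystem.IsReduced.take hred (k' + 1)
          rw [CoxeterSystem.IsReduced] at h3
          rw [List.take_succ_cons, cs.wordProd_cons] at h3
          rw [h3, length_cons, length_take]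
          omega
        omega
      have := tri cs hbld hz₁e hz1 hlen
      rw [List.take_succ_cons, cs.wordProd_cons]
      exact this
    · rw [List.drop_succ_cons]
      exact hz2

theorem step_unique (hbld : IsWBuilding cs δ) {x z z' Y : Ch} {p : W} {i : I}
    (h1 : δ x z = p) (h1' : δ x z' = p) (h2 : δ z Y = σ i) (h2' : δ z' Y = σ i)
    (hl : ℓ (p * σ i) = ℓ p + 1) : z = z' := by
  have h3 : δ Y z' = σ i := delta_symm_simple cs hbld i h2'
  rcases hbld.step z Y z' i h3 with hs | hs
  · rw [h2, cs.simple_mul_simple_self] at hs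
    exact (hbld.eq_one_iff z z').1 hs
  · rw [h2] at hs
    have h4 := hbld.step_len x z z' i hs (by rw [h1]; exact hl)
    rw [h1', h1] at h4
    have h5 := congrArg cs.length h4
    rw [hl] at h5
    omega

theorem between_unique (hbld : IsWBuilding cs δ) :
    ∀ (n : ℕ) (v p : W), ℓ v = n → ℓ (p * v) = ℓ p + ℓ v →
      ∀ (x y z z' : Ch), δ x z = p → δ z y = v → δ x z' = p → δ z' y = v → z = z' := by
  intro n
  induction n with
  | zero =>
    intro v p hv _ x y z z' _ hzy _ hz'y
    have hv1 : v = 1 := cs.length_eq_zero_iff.mp hv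
    subst hv1
    rw [(hbld.eq_one_iff z y).1 hzy, (hbld.eq_one_iff z' y).1 hz'y]
  | succ n ih =>
    intro v p hv hadd x y z z' hxz hzy hxz' hz'y
    have hvne : v ≠ 1 := by
      intro h
      rw [h, cs.length_one] at hv
      omega
    obtain ⟨i, hidesc⟩ := cs.exists_leftDescent_of_ne_one hvne
    rw [CoxeterSystem.IsLeftDescent] at hidesc
    set v' := σ i * v with hv'
    have hv'v : σ i * v' = v := by rw [hv']; exact cs.simple_mul_simple_cancel_left i
    have hlv' : ℓ v' = n := by
      rcases cs.length_simple_mul v i with h | h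
      · rw [← hv'] at h; omega
      · rw [← hv'] at h; omega
    obtain ⟨ωv', hv'red, hv'π⟩ := cs.exists_reduced_word' v'
    have hπcons : π (i :: ωv') = v := by rw [cs.wordProd_cons, ← hv'π, hv'v]
    have hredcons : cs.IsReduced (i :: ωv') := by
      rw [CoxeterSystem.IsReduced, hπcons, length_cons]
      have : ωv'.length = n := by
        rw [CoxeterSystem.IsReduced] at hv'red
        rw [← hv'red, ← hv'π, hlv']
      omega
    obtain ⟨z₁, hz₁a, hz₁b⟩ := exists_between cs hbld (i :: ωv') hredcons z y
      (by rw [hπcons]; exact hzy) 1 (by simp)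
    obtain ⟨z₁', hz₁a', hz₁b'⟩ := exists_between cs hbld (i :: ωv') hredcons z' y
      (by rw [hπcons]; exact hz'y) 1 (by simp)
    simp only [List.take_succ_cons, List.take_zero, List.drop_succ_cons, List.drop_zero,
      cs.wordProd_singleton] at hz₁a hz₁b hz₁a' hz₁b'
    have hpsi : ℓ (p * σ i) = ℓ p + 1 := by
      have hub := cs.length_mul_le p (σ i)
      rw [cs.length_simple] at hub
      have h2 := cs.length_mul_le (p * σ i) v'
      rw [mul_assoc, hv'v] at h2
      omega
    have hxz₁ : δ x z₁ = p * σ i := by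
      have := hbld.step_len x z z₁ i hz₁a (by rw [hxz]; exact hpsi)
      rw [hxz] at this
      exact this
    have hxz₁' : δ x z₁' = p * σ i := by
      have := hbld.step_len x z' z₁' i hz₁a' (by rw [hxz']; exact hpsi)
      rw [hxz'] at this
      exact this
    have hadd' : ℓ ((p * σ i) * v') = ℓ (p * σ i) + ℓ v' := by
      rw [mul_assoc, hv'v, hadd, hpsi, hlv', hv]
      omega
    have hz₁eq : z₁ = z₁' := by
      rw [← hv'π] at hz₁b hz₁b'
      exact ih v' (p * σ i) hlv' hadd' x y z₁ z₁' hxz₁ hz₁b hxz₁' hz₁b'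
    rw [hz₁eq] at hz₁a
    exact step_unique cs hbld hxz hxz' hz₁a hz₁a' hpsi

section LongestElement

variable (w₀ : W)

theorem length_mul_w₀ (hw₀ : ∀ w, ℓ w ≤ ℓ w₀) (x : W) : ℓ x + ℓ (x * w₀) = ℓ w₀ := by
  classical
  exact StrongExchangeAux.length_add_length_mul_longest cs w₀ hw₀ x

theorem w₀_mul_self (hw₀ : ∀ w, ℓ w ≤ ℓ w₀) : w₀ * w₀ = 1 := by
  have h := length_mul_w₀ cs w₀ hw₀ w₀
  have h0 : ℓ (w₀ * w₀) = 0 := by omega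
  exact cs.length_eq_zero_iff.mp h0

theorem w₀_inv (hw₀ : ∀ w, ℓ w ≤ ℓ w₀) : w₀⁻¹ = w₀ :=
  inv_eq_of_mul_eq_one_right (w₀_mul_self cs w₀ hw₀)

theorem length_inv_mul_w₀ (hw₀ : ∀ w, ℓ w ≤ ℓ w₀) (u : W) :
    ℓ u + ℓ (u⁻¹ * w₀) = ℓ w₀ := by
  have h := length_mul_w₀ cs w₀ hw₀ u⁻¹
  rwa [cs.length_inv] at h

theorem length_w₀_mul (hw₀ : ∀ w, ℓ w ≤ ℓ w₀) (u : W) :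
    ℓ u + ℓ (w₀ * u) = ℓ w₀ := by
  have e : ℓ (w₀ * u) = ℓ (u⁻¹ * w₀) := by
    rw [← cs.length_inv (w₀ * u), mul_inv_rev, w₀_inv cs w₀ hw₀]
  rw [e]
  exact length_inv_mul_w₀ cs w₀ hw₀ u

theorem exists_opp_apartment (hbld : IsWBuilding cs δ) (hw₀ : ∀ w, ℓ w ≤ ℓ w₀)
    {x y : Ch} (hxy : δ x y = w₀) :
    ∃ F : W → Ch, (∀ w, δ x (F w) = w ∧ δ (F w) y = w⁻¹ * w₀) ∧
      (∀ w z, δ x z = w → δ z y = w⁻¹ * w₀ → z = F w) ∧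
      IsApartmentOf cs δ (Set.range F) ∧ F 1 = x ∧ F w₀ = y := by
  have hE : ∀ w : W, ∃ z, δ x z = w ∧ δ z y = w⁻¹ * w₀ := by
    intro w
    obtain ⟨ω1, h1red, h1π⟩ := cs.exists_reduced_word' w
    obtain ⟨ω2, h2red, h2π⟩ := cs.exists_reduced_word' (w⁻¹ * w₀)
    have hπ : π (ω1 ++ ω2) = w₀ := by
      rw [cs.wordProd_append, ← h1π, ← h2π]
      group
    have hred : cs.IsReduced (ω1 ++ ω2) := by
      rw [CoxeterSystem.IsReduced, hπ, length_append]
      rw [CoxeterSystem.IsReduced] at h1red h2red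
      rw [← h1red, ← h2red, ← h1π, ← h2π]
      exact (length_inv_mul_w₀ cs w₀ hw₀ w).symm
    obtain ⟨z, hz1, hz2⟩ := exists_between cs hbld _ hred x y (by rw [hπ, hxy]) ω1.length
      (by simp)
    rw [take_left] at hz1
    rw [drop_left] at hz2
    rw [← h1π] at hz1
    rw [← h2π] at hz2
    exact ⟨z, hz1, hz2⟩
  choose F hF1 hF2 using hE
  have hadd : ∀ w : W, ℓ (w * (w⁻¹ * w₀)) = ℓ w + ℓ (w⁻¹ * w₀) := by
    intro w
    have h1 : w * (w⁻¹ * w₀) = w₀ := by group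
    rw [h1]
    exact (length_inv_mul_w₀ cs w₀ hw₀ w).symm
  have hFu : ∀ w z, δ x z = w → δ z y = w⁻¹ * w₀ → z = F w := by
    intro w z hz1 hz2
    exact between_unique cs hbld (ℓ (w⁻¹ * w₀)) (w⁻¹ * w₀) w rfl (hadd w) x y z (F w)
      hz1 hz2 (hF1 w) (hF2 w)
  have hADJ : ∀ (v : W) (i : I), ℓ (v * σ i) = ℓ v + 1 → δ (F v) (F (v * σ i)) = σ i := by
    intro v i hvi
    obtain ⟨e, h1e, h2e⟩ := hbld.exists_step y (F v) i
    have hxe : δ x e = v * σ i := by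
      have h := hbld.step_len x (F v) e i h1e (by rw [hF1 v]; exact hvi)
      rw [hF1 v] at h
      exact h
    have hey : δ e y = (v * σ i)⁻¹ * w₀ := by
      have h3 : δ y e = (w₀ * v) * σ i := by
        rw [h2e, hbld.symm (F v) y, hF2 v, mul_inv_rev, inv_inv, w₀_inv cs w₀ hw₀]
      have h4 : δ e y = ((w₀ * v) * σ i)⁻¹ := by rw [hbld.symm y e, h3]
      have h5 : ((w₀ * v) * σ i)⁻¹ = (v * σ i)⁻¹ * w₀⁻¹ := by group
      rw [h4, h5, w₀_inv cs w₀ hw₀]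
    have he := hFu (v * σ i) e hxe hey
    rw [← he]
    exact h1e
  have hFinj : Function.Injective F := by
    intro a b hab
    have h1 := hF1 a
    rw [hab, hF1 b] at h1
    exact h1.symm
  have hISO : ∀ u v : W, δ (F u) (F v) = u⁻¹ * v := by
    intro u v
    generalize hn : ℓ (u⁻¹ * v) = m
    induction m generalizing v with
    | zero =>
      have h1 : u⁻¹ * v = 1 := cs.length_eq_zero_iff.mp hn
      have h2 : u = v := by rwa [inv_mul_eq_one] at h1
      rw [← h2, (hbld.eq_one_iff (F u) (F u)).2 rfl]
      group
    | succ m ih =>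
      have hne : u⁻¹ * v ≠ 1 := by
        intro h
        rw [h, cs.length_one] at hn
        omega
      obtain ⟨i, hdesc⟩ := cs.exists_rightDescent_of_ne_one hne
      rw [CoxeterSystem.IsRightDescent, mul_assoc] at hdesc
      have hlv' : ℓ (u⁻¹ * (v * σ i)) = m := by
        rcases cs.length_mul_simple (u⁻¹ * v) i with h | h
        · rw [mul_assoc] at h
          omega
        · rw [mul_assoc] at h
          omega
      have hIHv' : δ (F u) (F (v * σ i)) = u⁻¹ * (v * σ i) := ih (v * σ i) hlv'
      have hadj : δ (F (v * σ i)) (F v) = σ i := by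
        rcases cs.length_mul_simple v i with h | h
        · exact delta_symm_simple cs hbld i (hADJ v i h)
        · have h2 : (v * σ i) * σ i = v := by rw [cs.simple_mul_simple_cancel_right]
          have h3 : ℓ ((v * σ i) * σ i) = ℓ (v * σ i) + 1 := by rw [h2]; omega
          have h4 := hADJ (v * σ i) i h3
          rw [h2] at h4
          exact h4
      have h5 : (u⁻¹ * (v * σ i)) * σ i = u⁻¹ * v := by
        rw [mul_assoc u⁻¹ (v * σ i) (σ i), cs.simple_mul_simple_cancel_right]
      have hcond : ℓ (δ (F u) (F (v * σ i)) * σ i) = ℓ (δ (F u) (F (v * σ i))) + 1 := by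
        rw [hIHv', h5, hlv', hn]
      have hfin := hbld.step_len (F u) (F (v * σ i)) (F v) i hadj hcond
      rw [hIHv', h5] at hfin
      exact hfin
  refine ⟨F, fun w => ⟨hF1 w, hF2 w⟩, hFu, ⟨F, hFinj, rfl, fun u v => hISO u v⟩, ?_, ?_⟩
  · exact (hFu 1 x (delta_self cs hbld x) (by rw [hxy]; group)).symm
  · exact (hFu w₀ y hxy (by rw [delta_self cs hbld y]; group)).symm

end LongestElement

theorem smul_panelOf {G : Type*} [Group G] [MulAction G Ch]
    (hact : IsIsometricAction cs δ G) (g : G) (z : Ch) (i : I) :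
    (fun x => g • x) '' panelOf cs δ z i = panelOf cs δ (g • z) i := by
  ext d
  constructor
  · rintro ⟨e, he, rfl⟩
    rcases he with h | h
    · exact Or.inl (by rw [hact g z e, h])
    · exact Or.inr (by rw [hact g z e, h])
  · intro hd
    refine ⟨g⁻¹ • d, ?_, by simp⟩
    have hiso : δ z (g⁻¹ • d) = δ (g • z) d := by
      conv_rhs => rw [show d = g • (g⁻¹ • d) by simp]
      rw [hact g z (g⁻¹ • d)]
    rcases hd with h | h
    · exact Or.inl (by rw [hiso, h])
    · exact Or.inr (by rw [hiso, h])

end BuildingAux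
/-- With `G` strongly transitive on a thick spherical building, `A` an
apartment, `c ∈ A`, `b ∈ B = Stab_G(c)`, and `c = γ 0, …, γ n = c̄` a minimal gallery in
`A` to the opposite chamber `c̄`: if `i < n` is the largest index with `b • γ i ∈ A`,
then there is `k ∈ B` stabilizing both panels of the pair of opposite panels of `A`
determined by `γ i ∩ γ (i+1)`, with `k • γ (i+1) = b • γ (i+1)` and `k • γ j = γ j`
for all `j ≤ i`. -/
theorem stmt5 {I W Ch G : Type*} [Group W] [Finite W] {M : CoxeterMatrix I}
    (cs : CoxeterSystem M W) (δ : Ch → Ch → W) (hbld : IsWBuilding cs δ)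
    (w₀ : W) (hw₀ : ∀ w : W, cs.length w ≤ cs.length w₀)
    (hthick : IsThick cs δ)
    [Group G] [MulAction G Ch] (hact : IsIsometricAction cs δ G)
    (hstrong : IsStronglyTransitive cs δ G)
    (A : Set Ch) (hA : IsApartmentOf cs δ A) (c : Ch) (hc : c ∈ A)
    (n : ℕ) (γ : ℕ → Ch) (hγ0 : γ 0 = c)
    (hgal : ∀ j < n, ∃ i : I, δ (γ j) (γ (j + 1)) = cs.simple i)
    (hγA : ∀ j ≤ n, γ j ∈ A)
    (hopp : δ c (γ n) = w₀)
    (hmin : ∀ (k : ℕ) (γ' : ℕ → Ch), γ' 0 = c → γ' k = γ n →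
      (∀ j < k, ∃ i : I, δ (γ' j) (γ' (j + 1)) = cs.simple i) →
      (∀ j ≤ k, γ' j ∈ A) → n ≤ k)
    (b : G) (hb : b • c = c)
    (i : ℕ) (hin : i < n) (hbi : b • γ i ∈ A)
    (himax : ∀ j ≤ n, b • γ j ∈ A → j ≤ i) :
    ∀ i₀ : I, δ (γ i) (γ (i + 1)) = cs.simple i₀ →
      ∃ k : G, k • c = c ∧
        (fun x => k • x) '' panelOf cs δ (γ i) i₀ = panelOf cs δ (γ i) i₀ ∧
        (∃ Q : Set Ch, OppPanelsIn cs δ w₀ A (panelOf cs δ (γ i) i₀) Q ∧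
          (fun x => k • x) '' Q = Q) ∧
        k • γ (i + 1) = b • γ (i + 1) ∧
        ∀ j ≤ i, k • γ j = γ j := by
  intro i₀ hi₀
  classical
  obtain ⟨f, hfinj, hfr, hfiso⟩ := hA
  obtain ⟨u₀, hu₀⟩ : ∃ u, f u = c := by rw [← hfr] at hc; exact hc
  have hmem : ∀ z, z ∈ A → ∃ u, f u = z := by intro z hz; rw [← hfr] at hz; exact hz
  have hδc : ∀ u, δ c (f u) = u₀⁻¹ * u := by intro u; rw [← hu₀, hfiso]
  have hA1 : ∀ z ∈ A, ∀ z' ∈ A, δ c z = δ c z' → z = z' := by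
    intro z hz z' hz' h
    obtain ⟨u, rfl⟩ := hmem z hz
    obtain ⟨u', rfl⟩ := hmem z' hz'
    rw [hδc, hδc] at h
    exact congrArg f (mul_left_cancel h)
  have hrep : ∀ z ∈ A, z = f (u₀ * δ c z) := by
    intro z hz
    obtain ⟨u, rfl⟩ := hmem z hz
    rw [hδc]
    congr 1
    group
  -- the type of the gallery γ
  set t : ℕ → I := fun j => if h : j < n then (hgal j h).choose else i₀ with hts
  have ht : ∀ j, j < n → δ (γ j) (γ (j+1)) = cs.simple (t j) := by
    intro j h
    have h1 : t j = (hgal j h).choose := by rw [hts]; exact dif_pos h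
    rw [h1]
    exact (hgal j h).choose_spec
  have hwstep : ∀ j, j < n → δ c (γ (j+1)) = δ c (γ j) * cs.simple (t j) := by
    intro j hj
    obtain ⟨p, hp⟩ := hmem (γ j) (hγA j (by omega))
    obtain ⟨p', hp'⟩ := hmem (γ (j+1)) (hγA (j+1) (by omega))
    have h1 : δ (γ j) (γ (j+1)) = p⁻¹ * p' := by rw [← hp, ← hp', hfiso]
    have h2 := ht j hj
    rw [h1] at h2
    rw [← hp', hδc, ← hp, hδc, mul_assoc, ← h2]
    group
  have hw : ∀ j, j ≤ n → δ c (γ j) = cs.wordProd ((List.range j).map t) := by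
    intro j
    induction j with
    | zero =>
      intro _
      rw [hγ0, BuildingAux.delta_self cs hbld]
      simp
    | succ j ih =>
      intro hj
      rw [hwstep j (by omega), ih (by omega), List.range_succ, List.map_append]
      simp [cs.wordProd_append]
  set ωγ : List I := (List.range n).map t with hωγ
  have hπγ : cs.wordProd ωγ = w₀ := by rw [← hw n le_rfl, hopp]
  have hle1 : cs.length w₀ ≤ n := by
    rw [← hπγ]
    calc cs.length (cs.wordProd ωγ) ≤ ωγ.length := cs.length_wordProd_le ωγ
    _ = n := by simp [hωγ]
  obtain ⟨ω₀, h₀red, h₀π⟩ := cs.exists_reduced_word' w₀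
  have h₀len : ω₀.length = cs.length w₀ := by
    rw [CoxeterSystem.IsReduced] at h₀red
    rw [← h₀red, ← h₀π]
  have hle2 : n ≤ cs.length w₀ := by
    have hγn : γ n = f (u₀ * w₀) := by
      conv_lhs => rw [hrep (γ n) (hγA n le_rfl)]
      rw [hopp]
    have hstep' : ∀ j < ω₀.length, ∃ ii : I,
        δ (f (u₀ * cs.wordProd (ω₀.take j))) (f (u₀ * cs.wordProd (ω₀.take (j+1)))) =
          cs.simple ii := by
      intro j hj
      refine ⟨ω₀.get ⟨j, hj⟩, ?_⟩
      have hts2 : ω₀.take (j+1) = ω₀.take j ++ [ω₀.get ⟨j, hj⟩] := by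
        rw [List.take_succ, List.getElem?_eq_getElem hj]
        rfl
      rw [hfiso, hts2, cs.wordProd_append, cs.wordProd_singleton]
      group
    have hres := hmin ω₀.length (fun j => f (u₀ * cs.wordProd (ω₀.take j)))
      (by simp [hu₀]) (by show f (u₀ * cs.wordProd (ω₀.take ω₀.length)) = γ n; rw [List.take_length, ← h₀π, ← hγn]) hstep'
      (fun j _ => by rw [← hfr]; exact ⟨_, rfl⟩)
    omega
  have hn : n = cs.length w₀ := le_antisymm hle2 hle1
  have hγred : cs.IsReduced ωγ := by
    rw [CoxeterSystem.IsReduced, hπγ, hωγ]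
    simp
    omega
  have hlen : ∀ j, j ≤ n → cs.length (δ c (γ j)) = j := by
    intro j hj
    rw [hw j hj]
    have h0 : (List.range n).take j = List.range j := by
      rw [List.take_range, min_eq_left hj]
    have h1 : (List.range j).map t = ωγ.take j := by
      rw [hωγ, ← List.map_take, h0]
    have h2 := CoxeterSystem.IsReduced.take hγred j
    rw [← h1, CoxeterSystem.IsReduced] at h2
    rw [h2, List.length_map, List.length_range]
  -- facts about b
  have hbδ : ∀ z z' : Ch, δ (b • z) (b • z') = δ z z' := hact b
  have hbc : ∀ z : Ch, δ c (b • z) = δ c z := by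
    intro z
    conv_lhs => rw [← hb]
    exact hact b c z
  have hbγi : b • γ i = γ i :=
    hA1 _ hbi _ (hγA i (by omega)) (hbc (γ i))
  have hbfix : ∀ m j, j ≤ i → i - j = m → b • γ j = γ j := by
    intro m
    induction m with
    | zero =>
      intro j hj hm
      have : j = i := by omega
      subst this
      exact hbγi
    | succ m ih =>
      intro j hj hm
      have hnext : b • γ (j+1) = γ (j+1) := ih (j+1) (by omega) (by omega)
      have h2 : δ (γ j) (γ (j+1)) = cs.simple (t j) := ht j (by omega)
      have h2' : δ (b • γ j) (γ (j+1)) = cs.simple (t j) := by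
        conv_lhs => rw [← hnext]
        rw [hbδ]
        exact h2
      have hl : cs.length (δ c (γ j) * cs.simple (t j)) = cs.length (δ c (γ j)) + 1 := by
        rw [← hwstep j (by omega), hlen (j+1) (by omega), hlen j (by omega)]
      exact (BuildingAux.step_unique cs hbld rfl (hbc (γ j)) h2 h2' hl).symm
  set c' := b • γ (i+1) with hc'
  have hδcc' : δ c c' = δ c (γ (i+1)) := hbc _
  have hδγic' : δ (γ i) c' = cs.simple i₀ := by
    conv_lhs => rw [← hbγi]
    rw [hc', hbδ]
    exact hi₀
  have hwi1 : δ c (γ (i+1)) = δ c (γ i) * cs.simple i₀ := by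
    obtain ⟨p, hp⟩ := hmem (γ i) (hγA i (by omega))
    obtain ⟨p', hp'⟩ := hmem (γ (i+1)) (hγA (i+1) (by omega))
    have h1 : δ (γ i) (γ (i+1)) = p⁻¹ * p' := by rw [← hp, ← hp', hfiso]
    have h2 := hi₀
    rw [h1] at h2
    rw [← hp', hδc, ← hp, hδc, mul_assoc, ← h2]
    group
  -- Coxeter facts about w₀
  have hKl : ∀ u : W, cs.length u + cs.length (u * w₀) = cs.length w₀ :=
    BuildingAux.length_mul_w₀ cs w₀ hw₀
  have hw₀sq : w₀ * w₀ = 1 := BuildingAux.w₀_mul_self cs w₀ hw₀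
  have hw₀inv : w₀⁻¹ = w₀ := BuildingAux.w₀_inv cs w₀ hw₀
  have hKr : ∀ u : W, cs.length u + cs.length (w₀ * u) = cs.length w₀ :=
    BuildingAux.length_w₀_mul cs w₀ hw₀
  -- the chamber q of A opposite γ (i+1)
  set q := f (u₀ * (δ c (γ (i+1)) * w₀)) with hq
  have hqA : q ∈ A := by rw [← hfr]; exact ⟨_, rfl⟩
  have hδγ1q : δ (γ (i+1)) q = w₀ := by
    conv_lhs => rw [hrep (γ (i+1)) (hγA (i+1) (by omega))]
    rw [hq, hfiso]
    group
  have hδqγ : ∀ j, j ≤ n → δ q (γ j) = w₀ * (δ c (γ (i+1)))⁻¹ * δ c (γ j) := by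
    intro j hj
    have h1 : δ q (γ j) = w₀⁻¹ * (δ c (γ (i+1)))⁻¹ * δ c (γ j) := by
      conv_lhs => rw [hrep (γ j) (hγA j hj)]
      rw [hq, hfiso]
      group
    rw [h1, hw₀inv]
  have hδqγi : δ q (γ i) = w₀ * cs.simple i₀ := by
    rw [hδqγ i (by omega), hwi1, mul_inv_rev, cs.inv_simple]
    group
  have hδqc' : δ q c' = w₀ := by
    have hcond : cs.length (δ q (γ i) * cs.simple i₀) = cs.length (δ q (γ i)) + 1 := by
      rw [hδqγi, mul_assoc, cs.simple_mul_simple_self, mul_one]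
      have h1 := hKr (cs.simple i₀)
      rw [cs.length_simple] at h1
      omega
    have h2 := hbld.step_len q (γ i) c' i₀ hδγic' hcond
    rw [h2, hδqγi, mul_assoc, cs.simple_mul_simple_self, mul_one]
  -- the apartment containing q and c'
  obtain ⟨F, hF, hFu, hFap, hF1, hFw₀⟩ :=
    BuildingAux.exists_opp_apartment cs w₀ hbld hw₀ hδqc'
  have hγmem : ∀ j, j ≤ i → γ j ∈ Set.range F := by
    intro j hj
    have h1 : δ q (γ j) = w₀ * (δ c (γ (i+1)))⁻¹ * δ c (γ j) := hδqγ j (by omega)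
    have h2 : δ (γ j) c' = (δ c (γ j))⁻¹ * δ c (γ (i+1)) := by
      conv_lhs => rw [← hbfix (i - j) j hj rfl]
      rw [hc', hbδ]
      obtain ⟨p, hp⟩ := hmem (γ j) (hγA j (by omega))
      obtain ⟨p', hp'⟩ := hmem (γ (i+1)) (hγA (i+1) (by omega))
      rw [← hp, ← hp', hfiso, hδc, hδc]
      group
    have h3 : δ (γ j) c' = (δ q (γ j))⁻¹ * w₀ := by
      rw [h2, h1]
      group
    exact ⟨_, (hFu (δ q (γ j)) (γ j) rfl h3).symm⟩
  have hqmem : q ∈ Set.range F := ⟨1, hF1⟩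
  have hc'mem : c' ∈ Set.range F := ⟨w₀, hFw₀⟩
  have hcmem : c ∈ Set.range F := by
    have h := hγmem 0 (by omega)
    rwa [hγ0] at h
  -- strong transitivity
  obtain ⟨g, hgim, hgc⟩ := hstrong (Set.range F) A hFap ⟨f, hfinj, hfr, hfiso⟩ c hcmem c hc
  have hgδ : ∀ z : Ch, δ c (g • z) = δ c z := by
    intro z
    conv_lhs => rw [← hgc]
    exact hact g c z
  have hgmem : ∀ z, z ∈ Set.range F → g • z ∈ A := by
    intro z hz
    rw [← hgim]
    exact ⟨z, hz, rfl⟩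
  have hkfix : ∀ z, z ∈ Set.range F → z ∈ A → g⁻¹ • z = z := by
    intro z h1 h2
    rw [inv_smul_eq_iff]
    exact (hA1 _ (hgmem z h1) _ h2 (hgδ z)).symm
  have hkγ : ∀ j, j ≤ i → g⁻¹ • γ j = γ j := fun j hj =>
    hkfix (γ j) (hγmem j hj) (hγA j (by omega))
  have hkq : g⁻¹ • q = q := hkfix q hqmem hqA
  have hkγ1 : g⁻¹ • γ (i+1) = c' := by
    have hgc' : g • c' = γ (i+1) :=
      hA1 _ (hgmem c' hc'mem) _ (hγA (i+1) (by omega)) (by rw [hgδ c', hδcc'])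
    rw [inv_smul_eq_iff]
    exact hgc'.symm
  refine ⟨g⁻¹, ?_, ?_, ?_, ?_, ?_⟩
  · rw [inv_smul_eq_iff]
    exact hgc.symm
  · rw [BuildingAux.smul_panelOf cs hact g⁻¹ (γ i) i₀, hkγ i le_rfl]
  · refine ⟨panelOf cs δ q i₀, ⟨⟨γ i, i₀, rfl⟩, ⟨q, i₀, rfl⟩,
      γ (i+1), ⟨Or.inr hi₀, hγA (i+1) (by omega)⟩,
      q, ⟨Or.inl (BuildingAux.delta_self cs hbld q), hqA⟩, hδγ1q⟩, ?_⟩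
    rw [BuildingAux.smul_panelOf cs hact g⁻¹ q i₀, hkq]
  · rw [hkγ1, hc']
  · exact hkγ
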